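/- Let (T(t))_{t≥0} be a chaotic strongly continuous semigroup on a Banach space B with B ≠ {0}. Then the generator of T has infinitely many purely imaginary eigenvalues; equivalently, the set {λ ∈ ℂ : Re λ = 0 and there exists x ∈ B, x ≠ 0, with T(t)x = e^{λt}x for all t ≥ 0} is infinite. -/

import Mathlib

open Filter Set MeasureTheory intervalIntegral Complex AddCircle Polynomial

section ChaoticAux

variable {B : Type*} [NormedAddCommGroup B] [NormedSpace ℂ B] [CompleteSpace B]

lemma chaotic_aux_fourier_unique {p : ℝ} [hp : Fact (0 < p)] (U : C(AddCircle p, ℂ))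
    (h : ∀ n : ℤ, fourierCoeff (⇑U) n = 0) : ∀ z, U z = 0 := by
  have key : U = 0 := by
    apply ContinuousMap.toLp_injective (𝕜 := ℂ) (p := 2) (haarAddCircle (T := p))
    set F := ContinuousMap.toLp (E := ℂ) 2 haarAddCircle ℂ U with hF
    have hae : (⇑F) =ᵐ[haarAddCircle] ⇑U :=
      ContinuousMap.coeFn_toLp (p := 2) (μ := haarAddCircle) (𝕜 := ℂ) U
    have hco : ∀ n : ℤ, fourierCoeff (⇑F) n = 0 := by
      intro n
      rw [← h n]
      unfold fourierCoeff
      exact integral_congr_ae (hae.mono fun x hx => by simp only [hx])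
    have : fourierBasis.repr F = 0 := by
      ext n
      rw [fourierBasis_repr]
      simpa using hco n
    have : F = 0 := by
      simpa using fourierBasis.repr.map_eq_zero_iff.mp this
    simpa [hF] using this
  intro z; rw [key]; rfl

lemma chaotic_aux_closure_eq_top_of_dual (q : Submodule ℂ B)
    (h : ∀ φ : B →L[ℂ] ℂ, (∀ x ∈ q, φ x = 0) → φ = 0) : q.topologicalClosure = ⊤ := by
  by_contra hne
  set Q := q.topologicalClosure with hQ
  haveI : IsClosed (Q : Set B) := q.isClosed_topologicalClosure
  obtain ⟨x, hx⟩ : ∃ x, x ∉ Q := by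
    by_contra h'; push_neg at h'; exact hne (Submodule.eq_top_iff'.mpr h')
  let mkc : B →L[ℂ] (B ⧸ Q) :=
    LinearMap.mkContinuous Q.mkQ 1 (fun m => by
      simpa using Submodule.Quotient.norm_mk_le Q m)
  have hmkx : (Submodule.Quotient.mk x : B ⧸ Q) ≠ 0 := by
    simpa [Submodule.Quotient.mk_eq_zero] using hx
  obtain ⟨g, -, hg⟩ := exists_dual_vector ℂ (Submodule.Quotient.mk x : B ⧸ Q) (norm_ne_zero_iff.mpr hmkx)
  have hφ : g.comp mkc = 0 := by
    apply h
    intro y hy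
    have : mkc y = 0 := by
      simpa [mkc, Submodule.Quotient.mk_eq_zero] using q.le_topologicalClosure hy
    simp [this]
  have : g (Submodule.Quotient.mk x : B ⧸ Q) = 0 := by
    have := congrArg (fun ψ => ψ x) hφ
    simpa [mkc] using this
  rw [hg] at this
  exact hmkx (norm_eq_zero.mp (by exact_mod_cast congrArg Complex.re this))

lemma chaotic_aux_bound_on_compact (T : ℝ → B →L[ℂ] B)
    (hTcont : ∀ f : B, ContinuousOn (fun t => T t f) (Set.Ici (0 : ℝ))) (b : ℝ) :
    ∃ M : ℝ, 0 ≤ M ∧ ∀ r : ℝ, 0 ≤ r → r ≤ b → ‖T r‖ ≤ M := by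
  have key : ∃ C, ∀ i : Icc (0:ℝ) b, ‖T i‖ ≤ C := by
    apply banach_steinhaus
    intro x
    have hcomp : IsCompact ((fun t => T t x) '' Icc 0 b) :=
      (isCompact_Icc).image_of_continuousOn ((hTcont x).mono (Icc_subset_Ici_self))
    obtain ⟨C, hC⟩ := hcomp.isBounded.exists_norm_le
    exact ⟨C, fun i => hC _ (mem_image_of_mem _ i.2)⟩
  obtain ⟨C, hC⟩ := key
  refine ⟨max C 0, le_max_right _ _, fun r h0 hb => le_trans (hC ⟨r, h0, hb⟩) (le_max_left _ _)⟩

lemma chaotic_aux_coeff_eigen (T : ℝ → B →L[ℂ] B)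
    (hTadd : ∀ s t : ℝ, 0 ≤ s → 0 ≤ t → T (s + t) = (T s).comp (T t))
    (hTcont : ∀ f : B, ContinuousOn (fun t => T t f) (Set.Ici (0:ℝ)))
    {f : B} {p : ℝ} (hp : 0 < p) (hf : T p f = f) {lam : ℂ}
    (hlam : Complex.exp (lam * p) = 1) (r : ℝ) (hr : 0 ≤ r) :
    T r (∫ s in (0:ℝ)..p, Complex.exp (-(lam * s)) • T s f)
      = Complex.exp (lam * r) • (∫ s in (0:ℝ)..p, Complex.exp (-(lam * s)) • T s f) := by
  set H : ℝ → B := fun u => Complex.exp (-(lam * u)) • T u f with hH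
  have contH : ContinuousOn H (Ici (0:ℝ)) := by
    apply ContinuousOn.smul _ (hTcont f)
    exact (Complex.continuous_exp.comp
      ((continuous_const.mul Complex.continuous_ofReal).neg)).continuousOn
  have intH : ∀ a b : ℝ, 0 ≤ a → 0 ≤ b → IntervalIntegrable H volume a b := by
    intro a b ha hb
    apply ContinuousOn.intervalIntegrable
    apply contH.mono
    rw [uIcc_comm]
    exact (uIcc_subset_Icc (by constructor <;> [exact hb; exact le_max_right a b] :
      b ∈ Icc (0:ℝ) (max a b)) ⟨ha, le_max_left a b⟩).trans (Icc_subset_Ici_self)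
  have step1 : T r (∫ s in (0:ℝ)..p, H s) = ∫ s in (0:ℝ)..p, Complex.exp (lam * r) • H (s + r) := by
    rw [← (T r).intervalIntegral_comp_comm (intH 0 p le_rfl hp.le)]
    apply intervalIntegral.integral_congr
    intro s hs
    have hs0 : 0 ≤ s := by
      rcases hs with ⟨h1, h2⟩
      simpa [min_eq_left hp.le] using h1
    have hTs : T r ((T s) f) = T (s + r) f := by
      rw [add_comm s r, hTadd r s hr hs0]; rfl
    simp only [hH, _root_.map_smul, hTs, smul_smul, ← Complex.exp_add]
    congr 2
    push_cast
    ring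
  rw [step1, intervalIntegral.integral_smul]
  congr 1
  have step2 : (∫ s in (0:ℝ)..p, H (s + r)) = ∫ u in r..(p + r), H u := by
    simpa using intervalIntegral.integral_comp_add_right (a := (0:ℝ)) (b := p) (d := r) H
  rw [step2]
  have hsplit : (∫ u in r..(p+r), H u) = (∫ u in r..p, H u) + ∫ u in p..(p+r), H u :=
    (intervalIntegral.integral_add_adjacent_intervals (intH r p hr hp.le)
      (intH p (p+r) hp.le (by linarith))).symm
  have hper : (∫ u in p..(p+r), H u) = ∫ u in (0:ℝ)..r, H u := by
    have := intervalIntegral.integral_comp_add_right (a := (0:ℝ)) (b := r) (d := p) H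
    rw [zero_add, add_comm r p] at this
    rw [← this]
    apply intervalIntegral.integral_congr
    intro u hu
    have hu0 : 0 ≤ u := by
      rcases hu with ⟨h1, h2⟩
      simpa [min_eq_left hr] using h1
    simp only [hH]
    have hT : T (u + p) f = T u f := by
      rw [hTadd u p hu0 hp.le]
      simp [hf]
    rw [hT]
    congr 1
    have : Complex.exp (-(lam * ↑(u + p))) = Complex.exp (-(lam*u)) * Complex.exp (-(lam*p)) := by
      rw [← Complex.exp_add]; congr 1; push_cast; ring
    rw [this]
    rw [show Complex.exp (-(lam * ↑p)) = (Complex.exp (lam * ↑p))⁻¹ from Complex.exp_neg _,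
      hlam, inv_one, mul_one]
  rw [hsplit, hper, add_comm]
  exact intervalIntegral.integral_add_adjacent_intervals (intH 0 r le_rfl hr) (intH r p hr hp.le)

lemma chaotic_aux_periodic_ann (T : ℝ → B →L[ℂ] B)
    (hT0 : T 0 = 1)
    (hTadd : ∀ s t : ℝ, 0 ≤ s → 0 ≤ t → T (s + t) = (T s).comp (T t))
    (hTcont : ∀ f : B, ContinuousOn (fun t => T t f) (Set.Ici (0:ℝ)))
    (φ : B →L[ℂ] ℂ)
    (hφ : ∀ (lam : ℂ) (x : B), lam.re = 0 → x ≠ 0 →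
      (∀ t : ℝ, 0 ≤ t → T t x = Complex.exp (lam * t) • x) → φ x = 0)
    {f : B} {p : ℝ} (hp : 0 < p) (hf : T p f = f) : φ f = 0 := by
  haveI : Fact (0 < p) := ⟨hp⟩
  set u : ℝ → ℂ := fun s => φ (T s f) with hu
  have contu : ContinuousOn u (Icc 0 p) :=
    (φ.continuous.comp_continuousOn ((hTcont f).mono Icc_subset_Ici_self))
  have hu0p : u 0 = u p := by simp [hu, hT0, hf]
  set U : C(AddCircle p, ℂ) := ⟨liftIco p 0 u, liftIco_zero_continuous (by simpa using hu0p) contu⟩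
    with hU
  have hpc : (p:ℂ) ≠ 0 := by exact_mod_cast hp.ne'
  have hcoeff : ∀ n : ℤ, fourierCoeff (⇑U) n = 0 := by
    intro n
    set lam : ℂ := ((2 * Real.pi * n / p : ℝ) : ℂ) * Complex.I with hlamdef
    have hlamre : lam.re = 0 := by simp [hlamdef, Complex.mul_re]
    have hlam1 : Complex.exp (lam * p) = 1 := by
      have : lam * p = (n : ℂ) * (2 * Real.pi * Complex.I) := by
        rw [hlamdef]
        push_cast
        field_simp
      rw [this]
      exact Complex.exp_int_mul_two_pi_mul_I n
    set c : B := ∫ s in (0:ℝ)..p, Complex.exp (-(lam * s)) • T s f with hc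
    have heig : ∀ r : ℝ, 0 ≤ r → T r c = Complex.exp (lam * r) • c :=
      fun r hr => chaotic_aux_coeff_eigen T hTadd hTcont hp hf hlam1 r hr
    have hφc : φ c = 0 := by
      by_cases hc0 : c = 0
      · simp [hc0]
      · exact hφ lam c hlamre hc0 heig
    have key : fourierCoeff (⇑U) n = (1 / (p : ℂ)) • φ c := by
      rw [hU]
      show fourierCoeff (liftIco p 0 u) n = _
      rw [fourierCoeff_liftIco_eq u n, fourierCoeffOn_eq_integral]
      have hint : IntervalIntegrable (fun s : ℝ => Complex.exp (-(lam * s)) • T s f) volume 0 p := by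
        apply ContinuousOn.intervalIntegrable
        apply ContinuousOn.smul
        · exact (Complex.continuous_exp.comp
            ((continuous_const.mul Complex.continuous_ofReal).neg)).continuousOn
        · exact (hTcont f).mono (by rw [uIcc_of_le hp.le]; exact Icc_subset_Ici_self)
      have : φ c = ∫ s in (0:ℝ)..p, fourier (-n) (s : AddCircle p) • u s := by
        rw [hc, ← φ.intervalIntegral_comp_comm hint]
        apply intervalIntegral.integral_congr
        intro s _
        simp only [_root_.map_smul, hu, smul_eq_mul]
        congr 1
        rw [fourier_coe_apply]
        congr 1
        rw [hlamdef]
        push_cast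
        field_simp [hpc]
      rw [this]
      simp [sub_zero]
    rw [key, hφc, smul_zero]
  have hU0 := chaotic_aux_fourier_unique U hcoeff
  have : U ((0 : ℝ) : AddCircle p) = u 0 := by
    show liftIco p 0 u (((0:ℝ) : AddCircle p)) = u 0
    exact liftIco_coe_apply
      (show (0:ℝ) ∈ Set.Ico (0:ℝ) (0 + p) by rw [Set.mem_Ico]; exact ⟨le_rfl, by linarith⟩)
  rw [hU0] at this
  simp [hu, hT0] at this
  exact this.symm

end ChaoticAux
-- appended part
theorem chaotic_semigroup_infinitely_many_imaginary_eigenvalues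
    {B : Type*} [NormedAddCommGroup B] [NormedSpace ℂ B] [CompleteSpace B] [Nontrivial B]
    (T : ℝ → B →L[ℂ] B)
    (hT0 : T 0 = 1)
    (hTadd : ∀ s t : ℝ, 0 ≤ s → 0 ≤ t → T (s + t) = (T s).comp (T t))
    (hTcont : ∀ f : B, ContinuousOn (fun t => T t f) (Set.Ici (0 : ℝ)))
    (hdense : ∃ f : B, Dense {y : B | ∃ t : ℝ, 0 ≤ t ∧ T t f = y})
    (hper : Dense {f : B | ∃ t : ℝ, 0 < t ∧ T t f = f}) :
    {lam : ℂ | lam.re = 0 ∧ ∃ x : B, x ≠ 0 ∧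
      ∀ t : ℝ, 0 ≤ t → T t x = Complex.exp (lam * t) • x}.Infinite := by
  classical
  set S := {lam : ℂ | lam.re = 0 ∧ ∃ x : B, x ≠ 0 ∧
      ∀ t : ℝ, 0 ≤ t → T t x = Complex.exp (lam * t) • x} with hSdef
  by_contra hinf
  have hfin : S.Finite := Set.not_infinite.mp hinf
  -- the set of eigenvectors with purely imaginary eigenvalue
  set EV : Set B := {x : B | x ≠ 0 ∧ ∃ lam ∈ S,
      ∀ t : ℝ, 0 ≤ t → T t x = Complex.exp (lam * t) • x} with hEVdef
  set D : Submodule ℂ B := Submodule.span ℂ EV with hDdef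
  -- Step 1: D is dense
  have hDtop : D.topologicalClosure = ⊤ := by
    apply chaotic_aux_closure_eq_top_of_dual
    intro φ hφD
    have hφEV : ∀ (lam : ℂ) (x : B), lam.re = 0 → x ≠ 0 →
        (∀ t : ℝ, 0 ≤ t → T t x = Complex.exp (lam * t) • x) → φ x = 0 := by
      intro lam x hre hx hrel
      apply hφD
      apply Submodule.subset_span
      exact ⟨hx, lam, ⟨hre, x, hx, hrel⟩, hrel⟩
    have hperiodic : ∀ f ∈ {f : B | ∃ t : ℝ, 0 < t ∧ T t f = f}, φ f = 0 := by
      rintro f ⟨t, ht, hft⟩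
      exact chaotic_aux_periodic_ann T hT0 hTadd hTcont φ hφEV ht hft
    have hfun : (⇑φ) = (fun _ => (0:ℂ)) :=
      Continuous.ext_on hper φ.continuous continuous_const hperiodic
    ext x
    exact congrFun hfun x
  have hclos : closure (D : Set B) = Set.univ := by
    have := congrArg (fun (p : Submodule ℂ B) => (p : Set B)) hDtop
    simpa [Submodule.topologicalClosure_coe] using this
  -- Step 2: choose a good time s₀
  obtain ⟨s₀, hs₀pos, hs₀inj⟩ : ∃ s₀ : ℝ, 0 < s₀ ∧ ∀ j ∈ S, ∀ k ∈ S,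
      Complex.exp (j * s₀) = Complex.exp (k * s₀) → j = k := by
    obtain ⟨Mb, hMb⟩ := ((hfin.image (fun z => |z.im|)).bddAbove)
    have hMb' : ∀ j ∈ S, |j.im| ≤ max Mb 0 :=
      fun j hj => le_trans (hMb (Set.mem_image_of_mem _ hj)) (le_max_left _ _)
    set s₀ : ℝ := 1 / (max Mb 0 + 1) with hs₀def
    have hden : (0:ℝ) < max Mb 0 + 1 := by positivity
    refine ⟨s₀, by positivity, ?_⟩
    intro j hj k hk hexp
    have hre_j : j.re = 0 := hj.1
    have hre_k : k.re = 0 := hk.1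
    have h1 : Complex.exp ((j - k) * s₀) = 1 := by
      rw [sub_mul, Complex.exp_sub, hexp, div_self (Complex.exp_ne_zero _)]
    rw [Complex.exp_eq_one_iff] at h1
    obtain ⟨m, hm⟩ := h1
    have him : (j.im - k.im) * s₀ = m * (2 * Real.pi) := by
      have := congrArg Complex.im hm
      simpa [Complex.sub_im, Complex.mul_im, Complex.ofReal_re, Complex.ofReal_im,
        Complex.intCast_re, Complex.intCast_im, Real.pi_ne_zero, hre_j, hre_k] using this
    have hm0 : m = 0 := by
      by_contra hm0
      have habs : |(j.im - k.im) * s₀| ≤ 2 := by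
        rw [abs_mul, abs_of_pos (show (0:ℝ) < s₀ from by positivity)]
        have h2 : |j.im - k.im| ≤ 2 * (max Mb 0 + 1) := by
          have l1 := hMb' j hj
          have l2 := hMb' k hk
          have l3 : |j.im - k.im| ≤ |j.im| + |k.im| := abs_sub _ _
          nlinarith [le_max_right Mb 0]
        have h3 : |j.im - k.im| * s₀ ≤ (2 * (max Mb 0 + 1)) * s₀ :=
          mul_le_mul_of_nonneg_right h2 (by positivity)
        have h4 : (2 * (max Mb 0 + 1)) * s₀ = 2 := by
          rw [hs₀def]; field_simp
        linarith
      have hm1 : (1:ℝ) ≤ |(m:ℝ)| := by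
        have : m ≠ 0 := hm0
        exact_mod_cast Int.one_le_abs (by exact_mod_cast this)
      have hpi : (2:ℝ) * Real.pi > 2 * 3 := by
        have := Real.pi_gt_three
        linarith
      have : |(m:ℝ) * (2 * Real.pi)| ≥ 1 * (2 * Real.pi) := by
        rw [abs_mul, abs_of_pos (by positivity : (0:ℝ) < 2 * Real.pi)]
        exact mul_le_mul_of_nonneg_right hm1 (by positivity)
      rw [← him] at this
      linarith [habs, this]
    rw [hm0] at him
    simp at him
    rcases him with him | him
    · exact Complex.ext (by rw [hre_j, hre_k]) (by linarith)
    · exact absurd him (show (0:ℝ) < s₀ by positivity).ne'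
  -- Step 3: spectral projections
  set Fs : Finset ℂ := hfin.toFinset with hFs
  have hmemFs : ∀ j, j ∈ Fs ↔ j ∈ S := fun j => hfin.mem_toFinset
  set E1 : ℂ → Polynomial ℂ :=
    fun j => ∏ k ∈ Fs.erase j, (Polynomial.X - Polynomial.C (Complex.exp (k * s₀))) with hE1
  set d : ℂ → ℂ :=
    fun j => ∏ k ∈ Fs.erase j, (Complex.exp (j * s₀) - Complex.exp (k * s₀)) with hd
  set P : ℂ → (B →L[ℂ] B) := fun j => (d j)⁻¹ • (Polynomial.aeval (T s₀) (E1 j)) with hP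
  have hd_ne : ∀ j ∈ Fs, d j ≠ 0 := by
    intro j hj
    rw [hd]
    apply Finset.prod_ne_zero_iff.mpr
    intro k hk
    intro heq
    have : Complex.exp (j * s₀) = Complex.exp (k * s₀) := sub_eq_zero.mp heq
    have hkj := hs₀inj j ((hmemFs j).mp hj) k ((hmemFs k).mp (Finset.mem_of_mem_erase hk)) this
    exact (Finset.ne_of_mem_erase hk) hkj.symm
  -- action of aeval of products on eigenvectors
  have haeval : ∀ (G : Finset ℂ) (lam : ℂ) (x : B), T s₀ x = Complex.exp (lam * s₀) • x →
      (Polynomial.aeval (T s₀) (∏ k ∈ G, (Polynomial.X - Polynomial.C (Complex.exp (k * s₀))))) x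
        = (∏ k ∈ G, (Complex.exp (lam * s₀) - Complex.exp (k * s₀))) • x := by
    intro G lam x hx
    induction G using Finset.induction_on with
    | empty => simp
    | @insert a G ha ih =>
      rw [Finset.prod_insert ha, Finset.prod_insert ha, map_mul,
        ContinuousLinearMap.mul_apply, ih]
      rw [_root_.map_smul]
      have : (Polynomial.aeval (T s₀) (Polynomial.X - Polynomial.C (Complex.exp (a * s₀)))) x
          = (Complex.exp (lam * s₀) - Complex.exp (a * s₀)) • x := by
        simp [map_sub, Polynomial.aeval_X, Polynomial.aeval_C,
          Algebra.algebraMap_eq_smul_one, hx, sub_smul]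
      rw [this, smul_smul, mul_comm]
  -- eigenvector plumbing
  have hEVrel : ∀ x ∈ EV, ∃ lam ∈ Fs, T s₀ x = Complex.exp (lam * s₀) • x ∧
      (∀ t : ℝ, 0 ≤ t → T t x = Complex.exp (lam * t) • x) := by
    rintro x ⟨hx0, lam, hlamS, hrel⟩
    exact ⟨lam, (hmemFs lam).mpr hlamS, hrel s₀ hs₀pos.le, hrel⟩
  -- Q = ∑ P j is the identity
  set Q : B →L[ℂ] B := ∑ j ∈ Fs, P j with hQ
  have hQEV : ∀ x ∈ EV, Q x = x := by
    intro x hxEV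
    obtain ⟨lam, hlamFs, hxs, -⟩ := hEVrel x hxEV
    rw [hQ, ContinuousLinearMap.sum_apply]
    have hterm : ∀ j ∈ Fs, P j x = if j = lam then x else 0 := by
      intro j hj
      rw [hP, ContinuousLinearMap.smul_apply, hE1, haeval _ lam x hxs]
      by_cases hjl : j = lam
      · subst hjl
        rw [if_pos rfl, smul_smul, inv_mul_cancel₀ (hd_ne j hj), one_smul]
      · rw [if_neg hjl]
        have : (∏ k ∈ Fs.erase j, (Complex.exp (lam * s₀) - Complex.exp (k * s₀))) = 0 := by
          apply Finset.prod_eq_zero (Finset.mem_erase.mpr ⟨fun h => hjl h.symm, hlamFs⟩)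
          simp
        rw [this, zero_smul, smul_zero]
    rw [Finset.sum_congr rfl hterm]
    simp [Finset.sum_ite_eq' Fs lam (fun _ => x), hlamFs]
  have hQall : ∀ x : B, Q x = x := by
    have hclosed : IsClosed {x : B | Q x = x} := isClosed_eq Q.continuous continuous_id
    have hsub : (D : Set B) ⊆ {x : B | Q x = x} := by
      intro x hx
      induction hx using Submodule.span_induction with
      | mem x hxEV => exact hQEV x hxEV
      | zero => show Q 0 = 0; exact map_zero Q
      | add x y _ _ hx hy =>
        have hx' : Q x = x := hx
        have hy' : Q y = y := hy
        show Q (x + y) = x + y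
        rw [map_add, hx', hy']
      | smul c x _ hx =>
        have hx' : Q x = x := hx
        show Q (c • x) = c • x
        rw [Q.map_smul, hx']
    intro x
    have : x ∈ closure (D : Set B) := by rw [hclos]; trivial
    exact closure_minimal hsub hclosed this
  -- full product annihilates everything
  have hfull : ∀ x : B,
      (Polynomial.aeval (T s₀) (∏ k ∈ Fs, (Polynomial.X - Polynomial.C (Complex.exp (k * s₀))))) x
        = 0 := by
    set A := Polynomial.aeval (T s₀) (∏ k ∈ Fs, (Polynomial.X - Polynomial.C (Complex.exp (k * s₀))))
    have hclosed : IsClosed {x : B | A x = 0} := isClosed_eq A.continuous continuous_const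
    have hsub : (D : Set B) ⊆ {x : B | A x = 0} := by
      intro x hx
      induction hx using Submodule.span_induction with
      | mem x hxEV =>
        obtain ⟨lam, hlamFs, hxs, -⟩ := hEVrel x hxEV
        show A x = 0
        rw [show A = Polynomial.aeval (T s₀)
          (∏ k ∈ Fs, (Polynomial.X - Polynomial.C (Complex.exp (k * s₀)))) from rfl,
          haeval _ lam x hxs]
        rw [Finset.prod_eq_zero hlamFs (by simp), zero_smul]
      | zero => show A 0 = 0; exact map_zero A
      | add x y _ _ hx hy =>
        have hx' : A x = 0 := hx
        have hy' : A y = 0 := hy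
        show A (x + y) = 0
        rw [map_add, hx', hy', add_zero]
      | smul c x _ hx =>
        have hx' : A x = 0 := hx
        show A (c • x) = 0
        rw [A.map_smul, hx', smul_zero]
    intro x
    have : x ∈ closure (D : Set B) := by rw [hclos]; trivial
    exact closure_minimal hsub hclosed this
  -- T s₀ acts on ranges of P j as scalar
  have hTP : ∀ j ∈ Fs, ∀ x : B, T s₀ (P j x) = Complex.exp (j * s₀) • P j x := by
    intro j hj x
    have key : T s₀ ((Polynomial.aeval (T s₀) (E1 j)) x)
        - Complex.exp (j * s₀) • ((Polynomial.aeval (T s₀) (E1 j)) x) = 0 := by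
      have h1 : T s₀ ((Polynomial.aeval (T s₀) (E1 j)) x)
          - Complex.exp (j * s₀) • ((Polynomial.aeval (T s₀) (E1 j)) x)
          = (Polynomial.aeval (T s₀)
              ((Polynomial.X - Polynomial.C (Complex.exp (j * s₀))) * E1 j)) x := by
        rw [map_mul, ContinuousLinearMap.mul_apply]
        have : (Polynomial.aeval (T s₀) (Polynomial.X - Polynomial.C (Complex.exp (j * s₀))))
            ((Polynomial.aeval (T s₀) (E1 j)) x)
            = T s₀ ((Polynomial.aeval (T s₀) (E1 j)) x)
              - Complex.exp (j * s₀) • ((Polynomial.aeval (T s₀) (E1 j)) x) := by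
          simp [map_sub, Polynomial.aeval_X, Polynomial.aeval_C, Algebra.algebraMap_eq_smul_one]
        rw [this]
      rw [h1, hE1, Finset.mul_prod_erase Fs (fun k => Polynomial.X - Polynomial.C (Complex.exp (k * s₀))) hj]
      exact hfull x
    have := sub_eq_zero.mp key
    rw [hP]
    simp only [ContinuousLinearMap.smul_apply]
    rw [(T s₀).map_smul, this, smul_comm]
  -- iterated action
  have hTm : ∀ m : ℕ, ∀ j ∈ Fs, ∀ x : B,
      T ((m : ℝ) * s₀) (P j x) = (Complex.exp (j * s₀))^m • P j x := by
    intro m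
    induction m with
    | zero => intro j hj x; simp [hT0]
    | succ m ih =>
      intro j hj x
      have hsum : ((m + 1 : ℕ) : ℝ) * s₀ = (m : ℝ) * s₀ + s₀ := by push_cast; ring
      rw [hsum, hTadd ((m:ℝ) * s₀) s₀ (by positivity) hs₀pos.le]
      show T ((m:ℝ) * s₀) (T s₀ (P j x)) = _
      rw [hTP j hj x, (T ((m:ℝ) * s₀)).map_smul, ih j hj x, smul_smul, pow_succ]
      ring_nf
  -- uniform bound along multiples of s₀
  set C : ℝ := ∑ j ∈ Fs, ‖P j‖ with hC
  have hC0 : 0 ≤ C := Finset.sum_nonneg (fun j _ => norm_nonneg _)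
  have hboundm : ∀ m : ℕ, ∀ x : B, ‖T ((m : ℝ) * s₀) x‖ ≤ C * ‖x‖ := by
    intro m x
    have hdecomp : T ((m : ℝ) * s₀) x = ∑ j ∈ Fs, (Complex.exp (j * s₀))^m • P j x := by
      conv_lhs => rw [← hQall x, hQ, ContinuousLinearMap.sum_apply, map_sum]
      exact Finset.sum_congr rfl (fun j hj => hTm m j hj x)
    rw [hdecomp]
    calc ‖∑ j ∈ Fs, (Complex.exp (j * s₀))^m • P j x‖
        ≤ ∑ j ∈ Fs, ‖(Complex.exp (j * s₀))^m • P j x‖ := norm_sum_le _ _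
      _ ≤ ∑ j ∈ Fs, ‖P j‖ * ‖x‖ := by
          apply Finset.sum_le_sum
          intro j hj
          rw [norm_smul, norm_pow]
          have hnorm1 : ‖Complex.exp (j * s₀)‖ = 1 := by
            rw [Complex.norm_exp]
            have : (j * (s₀:ℂ)).re = j.re * s₀ := by
              simp [Complex.mul_re, Complex.ofReal_re, Complex.ofReal_im]
            rw [this, ((hmemFs j).mp hj).1, zero_mul, Real.exp_zero]
          rw [hnorm1, one_pow, one_mul]
          exact (P j).le_opNorm x
      _ = C * ‖x‖ := by rw [hC, Finset.sum_mul]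
  -- global orbit bound
  obtain ⟨f₀, hf₀⟩ := hdense
  obtain ⟨M, hM0, hM⟩ := chaotic_aux_bound_on_compact T hTcont s₀
  set K : ℝ := M * (C * ‖f₀‖) with hK
  have hK0 : 0 ≤ K := by positivity
  have horbit : ∀ u : ℝ, 0 ≤ u → ‖T u f₀‖ ≤ K := by
    intro u hu
    set m : ℕ := ⌊u / s₀⌋.toNat with hm
    have h0 : (0:ℤ) ≤ ⌊u / s₀⌋ := Int.floor_nonneg.mpr (div_nonneg hu hs₀pos.le)
    have hcast : ((m : ℕ) : ℝ) = ((⌊u / s₀⌋ : ℤ) : ℝ) := by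
      rw [hm]; exact_mod_cast Int.toNat_of_nonneg h0
    set r : ℝ := u - (m : ℝ) * s₀ with hr
    have h1 : 0 ≤ u - (⌊u / s₀⌋ : ℝ) * s₀ := Int.sub_floor_div_mul_nonneg u hs₀pos
    have h2 : u - (⌊u / s₀⌋ : ℝ) * s₀ < s₀ := Int.sub_floor_div_mul_lt u hs₀pos
    have hr0 : 0 ≤ r := by rw [hr, hcast]; linarith
    have hrs : r ≤ s₀ := by rw [hr, hcast]; linarith
    have hu_eq : u = r + (m : ℝ) * s₀ := by rw [hr]; ring
    have : T u f₀ = T r (T ((m : ℝ) * s₀) f₀) := by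
      rw [hu_eq, hTadd r ((m:ℝ) * s₀) hr0 (by positivity)]; rfl
    rw [this]
    calc ‖T r (T ((m : ℝ) * s₀) f₀)‖
        ≤ ‖T r‖ * ‖T ((m : ℝ) * s₀) f₀‖ := (T r).le_opNorm _
      _ ≤ M * (C * ‖f₀‖) := by
          apply mul_le_mul (hM r hr0 hrs) (hboundm m f₀) (norm_nonneg _) hM0
  -- contradiction with density of the orbit
  obtain ⟨z, hz⟩ := exists_ne (0 : B)
  set y : B := ((K + 2) / ‖z‖ : ℝ) • z with hy
  have hzpos : 0 < ‖z‖ := norm_pos_iff.mpr hz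
  have hyn : ‖y‖ = K + 2 := by
    rw [hy, norm_smul, Real.norm_eq_abs,
      abs_of_pos (div_pos (by linarith) hzpos), div_mul_cancel₀ _ hzpos.ne']
  have hyd : y ∈ closure {y : B | ∃ t : ℝ, 0 ≤ t ∧ T t f₀ = y} := hf₀ y
  rw [Metric.mem_closure_iff] at hyd
  obtain ⟨b, ⟨t, ht, hb⟩, hdist⟩ := hyd 1 one_pos
  have : ‖y‖ ≤ ‖y - b‖ + ‖b‖ := by
    have := norm_sub_norm_le y b
    linarith [norm_sub_norm_le y b, abs_le.mp (le_refl |‖y‖ - ‖b‖|)]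
  have hbK : ‖b‖ ≤ K := by rw [← hb]; exact horbit t ht
  have hd1 : ‖y - b‖ < 1 := by rw [← dist_eq_norm]; exact hdist
  rw [hyn] at this
  linarith
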